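/- (The point estimate of the canonical Bayesian uncertainty network equals the MAP estimate.) Let V be a finite index type, S a type, η > 0 a real number, and f_i : S → ℝ a family of functions with f_i(x) > 0 for all i ∈ V and x ∈ S. For each x ∈ S, the infimum over β : V → ℝ of ∑_{i ∈ V} β_i subject to the constraints −log(f_i(x)) ≤ η · β_i for all i, equals −(1/η) · log(∏_{i ∈ V} f_i(x)). Consequently, a point x̂ ∈ S minimizes this infimum over S if and only if x̂ maximizes the product ∏_{i ∈ V} f_i(x) over S. -/

import Mathlib

lemma sInf_aux {V : Type*} [Fintype V] (η : ℝ) (hη : 0 < η) (g : V → ℝ) :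
    sInf {s : ℝ | ∃ β : V → ℝ, (∀ i, g i ≤ η * β i) ∧ s = ∑ i, β i} =
      ∑ i, g i / η := by
  have hmem : (∑ i, g i / η) ∈
      {s : ℝ | ∃ β : V → ℝ, (∀ i, g i ≤ η * β i) ∧ s = ∑ i, β i} :=
    ⟨fun i => g i / η, fun i => le_of_eq (mul_div_cancel₀ _ hη.ne').symm, rfl⟩
  have hlb : ∀ s ∈ {s : ℝ | ∃ β : V → ℝ, (∀ i, g i ≤ η * β i) ∧ s = ∑ i, β i},
      (∑ i, g i / η) ≤ s := by
    rintro s ⟨β, hβ, rfl⟩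
    exact Finset.sum_le_sum fun i _ => (div_le_iff₀' hη).2 (hβ i)
  exact le_antisymm (csInf_le ⟨_, hlb⟩ hmem) (le_csInf ⟨_, hmem⟩ hlb)

/-- The point estimate of the canonical Bayesian uncertainty network equals the
MAP estimate: for strictly positive factors `f i`, the infimum over `β` of
`∑ i, β i` subject to `-log (f i x) ≤ η * β i` equals
`-(1/η) * log (∏ i, f i x)`; consequently `xhat` minimizes this infimum over `S`
iff `xhat` maximizes `∏ i, f i x` over `S`. -/
theorem point_estimate_eq_MAP {V S : Type*} [Fintype V] (η : ℝ) (hη : 0 < η)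
    (f : V → S → ℝ) (hf : ∀ i x, 0 < f i x) :
    (∀ x : S,
      sInf {s : ℝ | ∃ β : V → ℝ,
          (∀ i, -Real.log (f i x) ≤ η * β i) ∧ s = ∑ i, β i} =
        -(1 / η) * Real.log (∏ i, f i x)) ∧
    ∀ xhat : S,
      (∀ x : S,
        sInf {s : ℝ | ∃ β : V → ℝ,
            (∀ i, -Real.log (f i xhat) ≤ η * β i) ∧ s = ∑ i, β i} ≤
          sInf {s : ℝ | ∃ β : V → ℝ,
              (∀ i, -Real.log (f i x) ≤ η * β i) ∧ s = ∑ i, β i}) ↔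
        ∀ x : S, ∏ i, f i x ≤ ∏ i, f i xhat := by
  have key : ∀ x : S,
      sInf {s : ℝ | ∃ β : V → ℝ,
          (∀ i, -Real.log (f i x) ≤ η * β i) ∧ s = ∑ i, β i} =
        -(1 / η) * Real.log (∏ i, f i x) := by
    intro x
    rw [sInf_aux η hη, Real.log_prod (fun i _ => (hf i x).ne'),
      Finset.mul_sum]
    apply Finset.sum_congr rfl
    intro i _
    field_simp
  refine ⟨key, fun xhat => ?_⟩
  simp only [key]
  constructor
  · intro h x
    have := h x
    have hlog : Real.log (∏ i, f i x) ≤ Real.log (∏ i, f i xhat) := by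
      have hpos : (0:ℝ) < 1/η := by positivity
      nlinarith
    exact (Real.log_le_log_iff (Finset.prod_pos fun i _ => hf i x)
      (Finset.prod_pos fun i _ => hf i xhat)).1 hlog
  · intro h x
    have hlog : Real.log (∏ i, f i x) ≤ Real.log (∏ i, f i xhat) :=
      Real.log_le_log (Finset.prod_pos fun i _ => hf i x) (h x)
    have hpos : (0:ℝ) < 1/η := by positivity
    nlinarith
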